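/- Let ħ > 0, l ∈ ℕ, m ∈ ℕ, and set E = ħ (2m + l + 3/2). Then there exists a real polynomial q with natDegree q = m and q(0) ≠ 0 such that the function u(r) = r^{l+1} · q(r^2) · exp(-r^2/(2ħ)) satisfies, for every r > 0, the radial harmonic-oscillator Schrödinger equation -(ħ^2/2) u''(r) + ( r^2/2 + ħ^2 l(l+1)/(2 r^2) ) u(r) = E u(r); in particular u(r)/r^{l+1} tends to q(0) ≠ 0 as r → 0⁺, so u behaves as the Frobenius solution u(r) ~ r^{l+1} at the regular singular point r = 0. -/

import Mathlib

open Polynomial Filter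

noncomputable def oscA (hbar : ℝ) (l m : ℕ) : ℕ → ℝ
  | 0 => 1
  | k + 1 => (((k : ℝ) - m) / (hbar * (k + 1) * ((k : ℝ) + l + 3 / 2))) * oscA hbar l m k

noncomputable def oscQ (hbar : ℝ) (l m : ℕ) : Polynomial ℝ :=
  ∑ k ∈ Finset.range (m + 1), Polynomial.monomial k (oscA hbar l m k)

lemma oscA_rec (hbar : ℝ) (hh : 0 < hbar) (l m k : ℕ) :
    hbar * (k + 1) * ((k : ℝ) + l + 3 / 2) * oscA hbar l m (k + 1)
      = ((k : ℝ) - m) * oscA hbar l m k := by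
  have hd : hbar * ((k : ℝ) + 1) * ((k : ℝ) + l + 3 / 2) ≠ 0 := by positivity
  rw [oscA]
  field_simp

lemma oscA_ne (hbar : ℝ) (hh : 0 < hbar) (l m : ℕ) : ∀ k, k ≤ m → oscA hbar l m k ≠ 0 := by
  intro k
  induction k with
  | zero => intro _; simp [oscA]
  | succ n ih =>
    intro hnm
    have hn : n < m := Nat.lt_of_succ_le hnm
    have h1 : ((n : ℝ) - m) ≠ 0 := by
      have : (n : ℝ) < m := by exact_mod_cast hn
      exact sub_ne_zero.mpr (ne_of_lt this)
    have hd : hbar * ((n : ℝ) + 1) * ((n : ℝ) + l + 3 / 2) ≠ 0 := by positivity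
    rw [oscA]
    exact mul_ne_zero (div_ne_zero h1 hd) (ih (le_of_lt hn))

lemma oscA_van (hbar : ℝ) (l m : ℕ) : ∀ n, m < n → oscA hbar l m n = 0 := by
  intro n hn
  induction n with
  | zero => omega
  | succ k ih =>
    rcases Nat.lt_or_ge m k with h | h
    · rw [oscA, ih h, mul_zero]
    · have : k = m := by omega
      subst this
      rw [oscA]
      simp

lemma oscQ_coeff (hbar : ℝ) (l m n : ℕ) : (oscQ hbar l m).coeff n = oscA hbar l m n := by
  unfold oscQ
  rw [finset_sum_coeff]
  simp only [coeff_monomial]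
  rw [Finset.sum_ite_eq' (Finset.range (m + 1)) n]
  by_cases h : n ∈ Finset.range (m + 1)
  · simp [h]
  · simp only [h, if_false]
    exact (oscA_van hbar l m n (by simpa using h)).symm

lemma oscQ_natDegree (hbar : ℝ) (hh : 0 < hbar) (l m : ℕ) : (oscQ hbar l m).natDegree = m := by
  apply le_antisymm
  · apply natDegree_le_iff_coeff_eq_zero.mpr
    intro n hn
    rw [oscQ_coeff]
    exact oscA_van hbar l m n hn
  · apply le_natDegree_of_ne_zero
    rw [oscQ_coeff]
    exact oscA_ne hbar hh l m m le_rfl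

lemma oscQ_eval_zero (hbar : ℝ) (l m : ℕ) : (oscQ hbar l m).eval 0 = 1 := by
  rw [← coeff_zero_eq_eval_zero, oscQ_coeff]
  rfl

lemma oscQ_key (hbar : ℝ) (hh : 0 < hbar) (l m : ℕ) :
    X * derivative (oscQ hbar l m) =
      C (hbar * ((l : ℝ) + 3 / 2)) * derivative (oscQ hbar l m)
        + C hbar * (X * derivative (derivative (oscQ hbar l m)))
        + C (m : ℝ) * oscQ hbar l m := by
  ext n
  rcases n with _ | n
  · simp only [coeff_add, coeff_C_mul, mul_coeff_zero, coeff_X_zero, zero_mul, mul_zero,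
      coeff_C_zero, coeff_derivative, oscQ_coeff]
    have h := oscA_rec hbar hh l m 0
    push_cast at h ⊢
    linear_combination -h
  · simp only [coeff_add, coeff_C_mul, coeff_X_mul, coeff_derivative, oscQ_coeff]
    have h := oscA_rec hbar hh l m (n + 1)
    push_cast at h ⊢
    linear_combination -h

lemma oscQ_eval_key (hbar : ℝ) (hh : 0 < hbar) (l m : ℕ) (s : ℝ) :
    s * (derivative (oscQ hbar l m)).eval s =
      hbar * ((l : ℝ) + 3 / 2) * (derivative (oscQ hbar l m)).eval s
        + hbar * (s * (derivative (derivative (oscQ hbar l m))).eval s)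
        + (m : ℝ) * (oscQ hbar l m).eval s := by
  have h := congrArg (Polynomial.eval s) (oscQ_key hbar hh l m)
  simpa using h

lemma gaussDeriv (hbar : ℝ) (hh : 0 < hbar) (s : ℝ) :
    HasDerivAt (fun t : ℝ => Real.exp (-t ^ 2 / (2 * hbar)))
      (-(s / hbar) * Real.exp (-s ^ 2 / (2 * hbar))) s := by
  have h1 : HasDerivAt (fun t : ℝ => -t ^ 2 / (2 * hbar)) (-(s / hbar)) s := by
    have h := ((hasDerivAt_pow 2 s).neg).div_const (2 * hbar)
    exact h.congr_deriv (by push_cast; ring)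
  have h2 := h1.exp
  convert h2 using 1
  ring

lemma evalSqDeriv (p : Polynomial ℝ) (s : ℝ) :
    HasDerivAt (fun t : ℝ => p.eval (t ^ 2)) (2 * s * (derivative p).eval (s ^ 2)) s := by
  have h := HasDerivAt.comp s (p.hasDerivAt (s ^ 2)) (hasDerivAt_pow 2 s)
  simp only [Function.comp_def] at h
  exact h.congr_deriv (by push_cast; ring)

lemma powDeriv (l : ℕ) (s : ℝ) :
    HasDerivAt (fun t : ℝ => t ^ (l + 1)) (((l : ℝ) + 1) * s ^ l) s := by
  have h := hasDerivAt_pow (l + 1) s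
  simp only [Nat.add_sub_cancel] at h
  push_cast at h
  exact h

theorem oscillator_bound_state (hbar : ℝ) (hhbar : 0 < hbar) (l m : ℕ) (E : ℝ)
    (hE : E = hbar * (2 * m + l + 3 / 2)) :
    ∃ q : Polynomial ℝ, q.natDegree = m ∧ q.eval 0 ≠ 0 ∧
      (∀ r : ℝ, 0 < r →
        -(hbar ^ 2 / 2) *
            deriv (deriv (fun r : ℝ =>
              r ^ (l + 1) * q.eval (r ^ 2) * Real.exp (-r ^ 2 / (2 * hbar)))) r +
          (r ^ 2 / 2 + hbar ^ 2 * l * (l + 1) / (2 * r ^ 2)) *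
            (r ^ (l + 1) * q.eval (r ^ 2) * Real.exp (-r ^ 2 / (2 * hbar))) =
          E * (r ^ (l + 1) * q.eval (r ^ 2) * Real.exp (-r ^ 2 / (2 * hbar)))) ∧
      Filter.Tendsto
        (fun r : ℝ =>
          (r ^ (l + 1) * q.eval (r ^ 2) * Real.exp (-r ^ 2 / (2 * hbar))) / r ^ (l + 1))
        (nhdsWithin 0 (Set.Ioi 0)) (nhds (q.eval 0)) := by
  refine ⟨oscQ hbar l m, oscQ_natDegree hbar hhbar l m,
    by rw [oscQ_eval_zero]; norm_num, ?_, ?_⟩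
  · -- the ODE
    intro r hr
    have hr0 : r ≠ 0 := ne_of_gt hr
    have hh0 : hbar ≠ 0 := ne_of_gt hhbar
    set q : Polynomial ℝ := oscQ hbar l m with hq
    have he : ∀ s : ℝ, HasDerivAt (fun t : ℝ => Real.exp (-t ^ 2 / (2 * hbar)))
        (-(s / hbar) * Real.exp (-s ^ 2 / (2 * hbar))) s := gaussDeriv hbar hhbar
    have hA := evalSqDeriv q
    have hB := evalSqDeriv (derivative q)
    have hp := powDeriv l
    have hu1 : deriv (fun s : ℝ => s ^ (l + 1) * q.eval (s ^ 2) * Real.exp (-s ^ 2 / (2 * hbar)))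
        = fun s : ℝ =>
          (((l : ℝ) + 1) * s ^ l * q.eval (s ^ 2)
              + s ^ (l + 1) * (2 * s * (derivative q).eval (s ^ 2)))
            * Real.exp (-s ^ 2 / (2 * hbar))
          + s ^ (l + 1) * q.eval (s ^ 2)
            * (-(s / hbar) * Real.exp (-s ^ 2 / (2 * hbar))) := by
      funext s
      exact (((hp s).mul (hA s)).mul (he s)).deriv
    have hveq : (fun s : ℝ =>
          (((l : ℝ) + 1) * s ^ l * q.eval (s ^ 2)
              + s ^ (l + 1) * (2 * s * (derivative q).eval (s ^ 2)))
            * Real.exp (-s ^ 2 / (2 * hbar))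
          + s ^ (l + 1) * q.eval (s ^ 2)
            * (-(s / hbar) * Real.exp (-s ^ 2 / (2 * hbar))))
        =ᶠ[nhds r] (fun s : ℝ =>
          (((l : ℝ) + 1) * (s ^ (l + 1) * s⁻¹) * q.eval (s ^ 2)
              + s ^ (l + 1) * (2 * s * (derivative q).eval (s ^ 2)))
            * Real.exp (-s ^ 2 / (2 * hbar))
          + s ^ (l + 1) * q.eval (s ^ 2)
            * (-(s / hbar) * Real.exp (-s ^ 2 / (2 * hbar)))) := by
      filter_upwards [compl_singleton_mem_nhds hr0] with x hx
      have hx0 : (x : ℝ) ≠ 0 := hx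
      have hxx : x ^ (l + 1) * x⁻¹ = x ^ l := by
        rw [pow_succ, mul_assoc, mul_inv_cancel₀ hx0, mul_one]
      rw [hxx]
    have hchain := ((((hp r).mul (hasDerivAt_inv hr0)).const_mul ((l : ℝ) + 1)).mul (hA r)
        |>.add ((hp r).mul (((hasDerivAt_id' r).const_mul 2).mul (hB r)))).mul (he r)
      |>.add (((hp r).mul (hA r)).mul
        ((((hasDerivAt_id' r).div_const hbar).neg).mul (he r)))
    have hdv := hchain.deriv
    beta_reduce at hdv
    simp only [Pi.mul_def, Pi.add_def, Pi.neg_def] at hdv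
    rw [hu1, hveq.deriv_eq, hdv]
    have hkey := oscQ_eval_key hbar hhbar l m (r ^ 2)
    rw [← hq] at hkey
    rw [hE]
    field_simp
    linear_combination (4 * hbar * r ^ 3 * r ^ l) * hkey
  · -- the limit
    have hcongr : ∀ s ∈ Set.Ioi (0 : ℝ),
        (oscQ hbar l m).eval (s ^ 2) * Real.exp (-s ^ 2 / (2 * hbar)) =
        (s ^ (l + 1) * (oscQ hbar l m).eval (s ^ 2) * Real.exp (-s ^ 2 / (2 * hbar)))
          / s ^ (l + 1) := by
      intro s hs
      rw [mul_comm (s ^ (l + 1)) _, mul_right_comm]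
      rw [mul_div_assoc, div_self (pow_ne_zero _ (ne_of_gt hs)), mul_one]
    apply Filter.Tendsto.congr' (Filter.eventuallyEq_of_mem self_mem_nhdsWithin hcongr)
    have hc : Continuous fun s : ℝ =>
        (oscQ hbar l m).eval (s ^ 2) * Real.exp (-s ^ 2 / (2 * hbar)) :=
      ((oscQ hbar l m).continuous.comp (continuous_pow 2)).mul
        (Real.continuous_exp.comp (((continuous_pow 2).neg).div_const (2 * hbar)))
    have h2 := (hc.tendsto 0).mono_left
      (nhdsWithin_le_nhds (s := Set.Ioi (0 : ℝ)))
    simpa using h2
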